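/- With embedding map I^{(2)}_{M→2M} e_M^m = (e_{2M}^{2m} + e_{2M}^{2m+1})/√2, the multiplication operators Û_M (by e^{2πim/M}) are NOT weakly cylindrically consistent: for the associated sesquilinear forms one has U_{2M}(I^{(2)}_{M→2M} e_M^m, I^{(2)}_{M→2M} e_M^n) = (1/2)(e^{2πim/M} + e^{2πi(m+1/2)/M}) δ_{mn}, which differs from U_M(e_M^m, e_M^n) = e^{2πim/M} δ_{mn}. -/

import Mathlib

/-- The orthonormal basis vector e_M^m = √M δ^m of ℂ^M. -/
noncomputable def eVec (M : ℕ) (m : ZMod M) : ZMod M → ℂ :=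
  fun a => if a = m then (Real.sqrt M : ℂ) else 0

/-- The embedding I^{(2)}_{M→2M} : ℂ^M → ℂ^{2M}, determined on the ONB by
e_M^m ↦ (e_{2M}^{2m} + e_{2M}^{2m+1})/√2; on functions: (I f)(n) = f(⌊n/2⌋). -/
def embed2 (M : ℕ) (f : ZMod M → ℂ) : ZMod (2 * M) → ℂ :=
  fun n => f ((n.val / 2 : ℕ) : ZMod M)

/-- The sesquilinear form U_N(f,g) = ⟨f, Û_N g⟩ of the multiplication operator
Û_N (by e^{2πim/N}) with respect to the normalized inner product on ℂ^N. -/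
noncomputable def Uform (N : ℕ) [NeZero N] (f g : ZMod N → ℂ) : ℂ :=
  (1 / (N : ℂ)) * ∑ m : ZMod N,
    (starRingEnd ℂ) (f m) * (Complex.exp (2 * Real.pi * Complex.I * m.val / N) * g m)

lemma uform_base (M : ℕ) [NeZero M] (m n : ZMod M) :
    Uform M (eVec M m) (eVec M n) =
      Complex.exp (2 * Real.pi * Complex.I * m.val / M) * (if m = n then 1 else 0) := by
  have hM : (M:ℂ) ≠ 0 := Nat.cast_ne_zero.2 (NeZero.ne M)
  have hs : ((Real.sqrt M : ℂ)) * (Real.sqrt M : ℂ) = (M:ℂ) := by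
    rw [← Complex.ofReal_mul, Real.mul_self_sqrt (Nat.cast_nonneg M)]
    simp
  unfold Uform eVec
  by_cases h : m = n
  · subst h
    rw [Finset.sum_eq_single m]
    · simp only [if_pos rfl, Complex.conj_ofReal]
      field_simp
      ring_nf
      simp only [if_true, Complex.conj_ofReal, mul_one]
      exact hs
    · intro b _ hb
      simp [hb]
    · simp
  · rw [if_neg h, mul_zero]
    rw [Finset.sum_eq_zero, mul_zero]
    intro k _
    by_cases hk : k = m
    · subst hk; simp [h]
    · simp [hk]


lemma uform_embed (M : ℕ) [NeZero M] (m n : ZMod M) :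
    Uform (2 * M) (embed2 M (eVec M m)) (embed2 M (eVec M n)) =
      (1 / 2) * (Complex.exp (2 * Real.pi * Complex.I * m.val / M) +
          Complex.exp (2 * Real.pi * Complex.I * ((m.val : ℂ) + 1 / 2) / M)) *
        (if m = n then 1 else 0) := by
  have hMpos : 0 < M := Nat.pos_of_ne_zero (NeZero.ne M)
  have hM : (M:ℂ) ≠ 0 := Nat.cast_ne_zero.2 (NeZero.ne M)
  have hs : ((Real.sqrt M : ℂ)) * (Real.sqrt M : ℂ) = (M:ℂ) := by
    rw [← Complex.ofReal_mul, Real.mul_self_sqrt (Nat.cast_nonneg M)]; simp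
  have hvm : m.val < M := ZMod.val_lt m
  have hcond : ∀ (k : ZMod (2*M)) (a : ZMod M),
      ((k.val / 2 : ℕ) : ZMod M) = a ↔ k.val / 2 = a.val := by
    intro k a
    constructor
    · intro h
      have h2 : k.val < 2 * M := ZMod.val_lt k
      have h3 : k.val / 2 < M := Nat.div_lt_of_lt_mul (by omega)
      rw [← h, ZMod.val_cast_of_lt h3]
    · intro h; rw [h, ZMod.natCast_val, ZMod.cast_id]
  unfold Uform embed2 eVec
  by_cases h : m = n
  · subst h
    rw [if_pos rfl]
    set k1 : ZMod (2*M) := ((2*m.val : ℕ) : ZMod (2*M)) with hk1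
    set k2 : ZMod (2*M) := ((2*m.val+1 : ℕ) : ZMod (2*M)) with hk2
    have hv1 : k1.val = 2*m.val := ZMod.val_cast_of_lt (by omega)
    have hv2 : k2.val = 2*m.val+1 := ZMod.val_cast_of_lt (by omega)
    have hne : k1 ≠ k2 := fun hkk => by rw [hkk, hv2] at hv1; omega
    rw [← Finset.sum_subset (Finset.subset_univ ({k1, k2} : Finset (ZMod (2*M))))
      (by
        intro k _ hk
        simp only [Finset.mem_insert, Finset.mem_singleton, not_or] at hk
        by_cases hc : ((k.val / 2 : ℕ) : ZMod M) = m
        · exfalso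
          have := (hcond k m).1 hc
          have hkval : k.val = 2*m.val ∨ k.val = 2*m.val+1 := by omega
          have hkid : ((k.val : ℕ) : ZMod (2*M)) = k := by
            rw [ZMod.natCast_val, ZMod.cast_id]
          rcases hkval with hv | hv
          · exact hk.1 (by rw [← hkid, hv])
          · exact hk.2 (by rw [← hkid, hv])
        · simp [hc])]
    rw [Finset.sum_pair hne]
    have hc1 : ((k1.val / 2 : ℕ) : ZMod M) = m := (hcond k1 m).2 (by omega)
    have hc2 : ((k2.val / 2 : ℕ) : ZMod M) = m := (hcond k2 m).2 (by omega)
    rw [if_pos hc1, if_pos hc2]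
    have e1 : (2 * (Real.pi:ℂ) * Complex.I * k1.val / ((2*M : ℕ):ℂ)) =
        2 * Real.pi * Complex.I * m.val / M := by
      rw [hv1]; push_cast; field_simp
    have e2 : (2 * (Real.pi:ℂ) * Complex.I * k2.val / ((2*M : ℕ):ℂ)) =
        2 * Real.pi * Complex.I * ((m.val : ℂ) + 1/2) / M := by
      rw [hv2]; push_cast; field_simp
    rw [e1, e2, Complex.conj_ofReal]
    have h2M : ((2*M : ℕ):ℂ) ≠ 0 := Nat.cast_ne_zero.2 (by omega)
    field_simp
    ring_nf
    rw [sq, hs]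
    push_cast; ring
  · rw [if_neg h, mul_zero]
    rw [Finset.sum_eq_zero, mul_zero]
    intro k _
    by_cases hc : ((k.val / 2 : ℕ) : ZMod M) = m
    · have hcn : ¬ ((k.val / 2 : ℕ) : ZMod M) = n := by
        intro hn; exact h (hc ▸ hn)
      simp [hcn]
    · simp [hc]

/-- With respect to I^{(2)}_{M→2M}, the multiplication operators Û_M
are NOT weakly cylindrically consistent: the flowed kernel is
(1/2)(e^{2πim/M} + e^{2πi(m+1/2)/M})δ_{mn}, which differs from e^{2πim/M}δ_{mn}. -/
theorem stmt9 (M : ℕ) [NeZero M] :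
    (∀ m n : ZMod M,
      Uform (2 * M) (embed2 M (eVec M m)) (embed2 M (eVec M n)) =
        (1 / 2) * (Complex.exp (2 * Real.pi * Complex.I * m.val / M) +
            Complex.exp (2 * Real.pi * Complex.I * ((m.val : ℂ) + 1 / 2) / M)) *
          (if m = n then 1 else 0)) ∧
    (∀ m n : ZMod M,
      Uform M (eVec M m) (eVec M n) =
        Complex.exp (2 * Real.pi * Complex.I * m.val / M) * (if m = n then 1 else 0)) ∧
    ¬ (∀ m n : ZMod M,
      Uform (2 * M) (embed2 M (eVec M m)) (embed2 M (eVec M n)) =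
        Uform M (eVec M m) (eVec M n)) := by
  refine ⟨uform_embed M, uform_base M, ?_⟩
  intro h
  have h0 := h 0 0
  rw [uform_embed M 0 0, uform_base M 0 0, if_pos rfl, mul_one, mul_one] at h0
  have hz : (((0 : ZMod M)).val : ℂ) = 0 := by simp [ZMod.val_zero]
  rw [hz] at h0
  simp only [mul_zero, zero_div, Complex.exp_zero, zero_add] at h0
  have hF : Complex.exp (2 * Real.pi * Complex.I * (1/2 : ℂ) / M) = 1 := by
    linear_combination 2 * h0
  rw [Complex.exp_eq_one_iff] at hF
  obtain ⟨n, hn⟩ := hF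
  have hM : (M:ℂ) ≠ 0 := Nat.cast_ne_zero.2 (NeZero.ne M)
  have hpi : ((Real.pi:ℝ):ℂ) ≠ 0 := by exact_mod_cast Real.pi_ne_zero
  have key : (1:ℂ) = 2*n*M := by
    field_simp at hn
    have hne : (2*(Real.pi:ℂ)*Complex.I) ≠ 0 :=
      mul_ne_zero (mul_ne_zero two_ne_zero hpi) Complex.I_ne_zero
    have h2 : (2*(Real.pi:ℂ)*Complex.I) * 1 = (2*(Real.pi:ℂ)*Complex.I) * (2*n*M) := by
      linear_combination (2*(Real.pi:ℂ)*Complex.I) * hn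
    exact mul_left_cancel₀ hne h2
  have key' : (1:ℤ) = 2*n*M := by exact_mod_cast key
  have : (2:ℤ) ∣ 1 := ⟨n*M, by linarith⟩
  norm_num at this
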